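/- Let (X,ρ) be a complete metric space and T_n : X → X maps with ρ(T_n x, T_n y) ≤ λ_n ρ(x,y), λ_n ∈ (0,1). Assume ∑_{n=1}^∞ ∏_{j=1}^n λ_j < ∞ and sup_n ρ(T_n x, x) < ∞ for some x ∈ X. Then for every y ∈ X the sequence S_n y := T_1∘T_2∘⋯∘T_n y converges to a limit x₀ ∈ X which is independent of y. -/

import Mathlib

open Filter

/-- Generalized contraction theorem: if `T n` are contractions with ratios
`lam n ∈ (0,1)`, `∑_n ∏_{j≤n} lam j < ∞` and `sup_n dist (T n x) x < ∞` for some `x`,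
then the compositions `S n y = T 0 ∘ ⋯ ∘ T n y` converge to a limit independent of `y`. -/
theorem stmt1 {X : Type*} [MetricSpace X] [CompleteSpace X]
    (T : ℕ → X → X) (lam : ℕ → ℝ)
    (hlam : ∀ n, lam n ∈ Set.Ioo (0 : ℝ) 1)
    (hcontr : ∀ n a b, dist (T n a) (T n b) ≤ lam n * dist a b)
    (hsum : Summable (fun n => ∏ j ∈ Finset.range (n + 1), lam j))
    (x : X) (hx : ∃ M : ℝ, ∀ n, dist (T n x) x ≤ M)
    (S : ℕ → X → X)
    (hS0 : ∀ y, S 0 y = T 0 y)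
    (hSsucc : ∀ n y, S (n + 1) y = S n (T (n + 1) y)) :
    ∃ x₀ : X, ∀ y : X, Tendsto (fun n => S n y) atTop (nhds x₀) := by
  obtain ⟨M, hM⟩ := hx
  set Λ : ℕ → ℝ := fun n => ∏ j ∈ Finset.range (n + 1), lam j with hΛ
  have hΛpos : ∀ n, 0 < Λ n := fun n =>
    Finset.prod_pos fun j _ => (hlam j).1
  -- Lipschitz bound for S n
  have hLip : ∀ n a b, dist (S n a) (S n b) ≤ Λ n * dist a b := by
    intro n
    induction n with
    | zero =>
      intro a b
      rw [hS0, hS0]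
      calc dist (T 0 a) (T 0 b) ≤ lam 0 * dist a b := hcontr 0 a b
        _ = Λ 0 * dist a b := by simp [hΛ]
    | succ n ih =>
      intro a b
      rw [hSsucc, hSsucc]
      calc dist (S n (T (n + 1) a)) (S n (T (n + 1) b))
          ≤ Λ n * dist (T (n + 1) a) (T (n + 1) b) := ih _ _
        _ ≤ Λ n * (lam (n + 1) * dist a b) := by
            exact mul_le_mul_of_nonneg_left (hcontr (n + 1) a b) (hΛpos n).le
        _ = Λ (n + 1) * dist a b := by
            simp only [hΛ, Finset.prod_range_succ]; ring
  -- S n x is Cauchy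
  have hcau : CauchySeq (fun n => S n x) := by
    apply cauchySeq_of_dist_le_of_summable (fun n => Λ n * M)
    · intro n
      rw [dist_comm, hSsucc]
      calc dist (S n (T (n + 1) x)) (S n x)
          ≤ Λ n * dist (T (n + 1) x) x := hLip n _ _
        _ ≤ Λ n * M := mul_le_mul_of_nonneg_left (hM (n + 1)) (hΛpos n).le
    · exact hsum.mul_right M
  obtain ⟨x₀, hx₀⟩ := cauchySeq_tendsto_of_complete hcau
  have hΛ0 : Tendsto Λ atTop (nhds 0) := hsum.tendsto_atTop_zero
  refine ⟨x₀, fun y => ?_⟩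
  rw [tendsto_iff_dist_tendsto_zero]
  have hb : ∀ n, dist (S n y) x₀ ≤ Λ n * dist y x + dist (S n x) x₀ := fun n =>
    (dist_triangle _ (S n x) _).trans (add_le_add (hLip n y x) le_rfl)
  have hlim : Tendsto (fun n => Λ n * dist y x + dist (S n x) x₀) atTop (nhds 0) := by
    have h1 : Tendsto (fun n => Λ n * dist y x) atTop (nhds 0) := by
      simpa using hΛ0.mul_const (dist y x)
    have h2 : Tendsto (fun n => dist (S n x) x₀) atTop (nhds 0) := by
      rwa [← tendsto_iff_dist_tendsto_zero]
    simpa using h1.add h2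
  exact squeeze_zero (fun n => dist_nonneg) hb hlim
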